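/- For n ≥ 4, the even symmetric n-ary octic form T_n = M_2 (M_2^3 - 5 M_2 M_4 + 6 M_6) is positive semidefinite but not a sum of squares of forms. -/

import Mathlib

open MvPolynomial Finset

noncomputable def M (n r : ℕ) : MvPolynomial (Fin n) ℝ := ∑ j, X j ^ r

def IsSosForms {n : ℕ} (f : MvPolynomial (Fin n) ℝ) : Prop :=
  ∃ (k : ℕ) (h : Fin k → MvPolynomial (Fin n) ℝ),
    (∀ i, ∃ d, (h i).IsHomogeneous d) ∧ f = ∑ i, h i ^ 2

section Aux

private lemma schur3_sorted (x y z : ℝ) (hz : 0 ≤ z) (h1 : y ≤ x) (h2 : z ≤ y) :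
    0 ≤ x*((x+y+z)-2*x)*((x+y+z)-3*x) + y*((x+y+z)-2*y)*((x+y+z)-3*y)
      + z*((x+y+z)-2*z)*((x+y+z)-3*z) := by
  nlinarith [mul_nonneg (sq_nonneg (x-y)) (by linarith : (0:ℝ) ≤ x + y - z),
    mul_nonneg (mul_nonneg hz (by linarith : (0:ℝ) ≤ x - z)) (by linarith : (0:ℝ) ≤ y - z)]

private lemma schur3 (x y z s : ℝ) (hx : 0 ≤ x) (hy : 0 ≤ y) (hz : 0 ≤ z)
    (hs : s = x + y + z) :
    0 ≤ x*(s-2*x)*(s-3*x) + y*(s-2*y)*(s-3*y) + z*(s-2*z)*(s-3*z) := by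
  subst hs
  rcases le_total x y with h1 | h1 <;> rcases le_total y z with h2 | h2 <;>
    rcases le_total x z with h3 | h3
  · nlinarith [schur3_sorted z y x hx h2 h1]
  · nlinarith [schur3_sorted z y x hx h2 h1]
  · nlinarith [schur3_sorted y z x hx h2 h3]
  · nlinarith [schur3_sorted y x z hz h1 h3]
  · nlinarith [schur3_sorted z x y hy h3 h1]
  · nlinarith [schur3_sorted x z y hy h3 h2]
  · nlinarith [schur3_sorted x y z hz h1 h2]
  · nlinarith [schur3_sorted x y z hz h1 h2]

private lemma key_ineq {n : ℕ} (hn : 0 < n) (y : Fin n → ℝ) (hy : ∀ i, 0 ≤ y i) :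
    0 ≤ ∑ i, y i * ((∑ j, y j) - 2 * y i) * ((∑ j, y j) - 3 * y i) := by
  set S := ∑ j, y j with hS
  have hS0 : 0 ≤ S := Finset.sum_nonneg fun i _ => hy i
  have hyS : ∀ i, y i ≤ S := fun i =>
    Finset.single_le_sum (fun j _ => hy j) (mem_univ i)
  by_cases hbig : ∃ a b : Fin n, a ≠ b ∧ 3 * S < 10 * y a ∧ 3 * S < 10 * y b
  · obtain ⟨a, b, hab, ha, hb⟩ := hbig
    have hbmem : b ∈ univ.erase a := by simp [hab.symm]
    set t : Finset (Fin n) := (univ.erase a).erase b with ht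
    have hsplit : ∀ f : Fin n → ℝ, ∑ i, f i = f a + (f b + ∑ i ∈ t, f i) := by
      intro f
      rw [← Finset.add_sum_erase _ f (mem_univ a), ← Finset.add_sum_erase _ f hbmem]
    set R : ℝ := ∑ i ∈ t, y i with hR
    have hR0 : 0 ≤ R := Finset.sum_nonneg fun i _ => hy i
    have hSsum : S = y a + (y b + R) := by rw [hS]; exact hsplit y
    have hRS : 5 * R ≤ 2 * S := by nlinarith
    have hstep : ∀ i ∈ t, y i * ((S - 2 * R) * (S - 3 * R)) ≤
        y i * ((S - 2 * y i) * (S - 3 * y i)) := by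
      intro i hi
      have hiR : y i ≤ R := Finset.single_le_sum (fun j _ => hy j) hi
      have : (S - 2 * R) * (S - 3 * R) ≤ (S - 2 * y i) * (S - 3 * y i) := by
        nlinarith [mul_nonneg (by linarith : (0:ℝ) ≤ R - y i)
          (by linarith : (0:ℝ) ≤ 5 * S - 6 * y i - 6 * R)]
      exact mul_le_mul_of_nonneg_left this (hy i)
    have hsum : R * ((S - 2 * R) * (S - 3 * R)) ≤
        ∑ i ∈ t, y i * ((S - 2 * y i) * (S - 3 * y i)) := by
      calc R * ((S - 2 * R) * (S - 3 * R))
          = ∑ i ∈ t, y i * ((S - 2 * R) * (S - 3 * R)) := by rw [← Finset.sum_mul]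
        _ ≤ _ := Finset.sum_le_sum hstep
    have hsch := schur3 (y a) (y b) R S (hy a) (hy b) hR0 (by linarith)
    rw [hsplit (fun i => y i * (S - 2 * y i) * (S - 3 * y i))]
    have : ∀ i ∈ t, y i * (S - 2 * y i) * (S - 3 * y i)
        = y i * ((S - 2 * y i) * (S - 3 * y i)) := fun i _ => by ring
    rw [Finset.sum_congr rfl this]
    nlinarith
  · push_neg at hbig
    have hex : ∃ a : Fin n, ∀ j, j ≠ a → 10 * y j ≤ 3 * S := by
      by_cases hex2 : ∃ a, 3 * S < 10 * y a
      · obtain ⟨a, ha⟩ := hex2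
        exact ⟨a, fun j hj => hbig a j (Ne.symm hj) ha⟩
      · push_neg at hex2
        exact ⟨⟨0, hn⟩, fun j _ => hex2 j⟩
    obtain ⟨a, hsmall⟩ := hex
    have hsplit : ∀ f : Fin n → ℝ, ∑ i, f i = f a + ∑ i ∈ univ.erase a, f i := by
      intro f
      rw [← Finset.add_sum_erase _ f (mem_univ a)]
    have hya : y a ≤ S := hyS a
    have hrest : S - y a = ∑ i ∈ univ.erase a, y i := by
      rw [hS, hsplit y]; ring
    have hstep : ∀ i ∈ univ.erase a, y i * (S ^ 2 / 25) ≤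
        y i * ((S - 2 * y i) * (S - 3 * y i)) := by
      intro i hi
      have hi' : 10 * y i ≤ 3 * S := hsmall i (Finset.mem_erase.mp hi).1
      have : S ^ 2 / 25 ≤ (S - 2 * y i) * (S - 3 * y i) := by
        nlinarith [mul_nonneg (by linarith : (0:ℝ) ≤ 3 * S - 10 * y i)
          (by linarith : (0:ℝ) ≤ 8 * S - 15 * y i)]
      exact mul_le_mul_of_nonneg_left this (hy i)
    have hsum : (S - y a) * (S ^ 2 / 25) ≤
        ∑ i ∈ univ.erase a, y i * ((S - 2 * y i) * (S - 3 * y i)) := by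
      calc (S - y a) * (S ^ 2 / 25)
          = ∑ i ∈ univ.erase a, y i * (S ^ 2 / 25) := by rw [hrest, ← Finset.sum_mul]
        _ ≤ _ := Finset.sum_le_sum hstep
    rw [hsplit (fun i => y i * (S - 2 * y i) * (S - 3 * y i))]
    have : ∀ i ∈ univ.erase a, y i * (S - 2 * y i) * (S - 3 * y i)
        = y i * ((S - 2 * y i) * (S - 3 * y i)) := fun i _ => by ring
    rw [Finset.sum_congr rfl this]
    have hfin : 0 ≤ y a * (S - 2 * y a) * (S - 3 * y a) + (S - y a) * (S ^ 2 / 25) := by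
      nlinarith [mul_nonneg (hy a) (sq_nonneg (159 * y a - 70 * S)),
        mul_nonneg (by linarith : (0:ℝ) ≤ S - y a) (sq_nonneg (3 * y a - S)),
        mul_nonneg (hy a) (sq_nonneg S)]
    linarith

variable {n : ℕ}

private lemma evalM (x : Fin n → ℝ) (r : ℕ) : eval x (M n r) = ∑ j, x j ^ r := by
  simp [M]

private lemma evalT (x : Fin n → ℝ) :
    eval x (M n 2 * ((M n 2) ^ 3 - 5 * M n 2 * M n 4 + 6 * M n 6))
      = (∑ j, x j ^ 2) * ((∑ j, x j ^ 2) ^ 3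
        - 5 * (∑ j, x j ^ 2) * (∑ j, x j ^ 4) + 6 * (∑ j, x j ^ 6)) := by
  simp [evalM]

private def pt1 (i : Fin n) (t : ℝ) : Fin n → ℝ := fun l => if l = i then t else 0
private def pt2 (i j : Fin n) (ε : ℝ) : Fin n → ℝ :=
  fun l => if l = i then 1 else if l = j then ε else 0
private def pt3 (i j k : Fin n) (ε ε' : ℝ) : Fin n → ℝ :=
  fun l => if l = i then 1 else if l = j then ε else if l = k then ε' else 0

private lemma sum_pt1 (i : Fin n) (t : ℝ) (r : ℕ) (hr : r ≠ 0) :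
    ∑ l, (pt1 i t l) ^ r = t ^ r := by
  have h : ∀ l, (pt1 i t l) ^ r = if l = i then t ^ r else 0 := by
    intro l; unfold pt1; split_ifs <;> simp [zero_pow hr]
  simp [h]

private lemma sum_pt2 (i j : Fin n) (hij : i ≠ j) (ε : ℝ) (r : ℕ) (hr : r ≠ 0) :
    ∑ l, (pt2 i j ε l) ^ r = 1 + ε ^ r := by
  have h : ∀ l, (pt2 i j ε l) ^ r
      = (if l = i then 1 else 0) + (if l = j then ε ^ r else 0) := by
    intro l; unfold pt2
    rcases eq_or_ne l i with h1 | h1 <;> rcases eq_or_ne l j with h2 | h2 <;>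
      first
      | (exfalso; exact hij (h1 ▸ h2 ▸ rfl))
      | simp [h1, h2, hij, Ne.symm hij, zero_pow hr]
  simp [h, Finset.sum_add_distrib]

private lemma sum_pt3 (i j k : Fin n) (hij : i ≠ j) (hik : i ≠ k) (hjk : j ≠ k)
    (ε ε' : ℝ) (r : ℕ) (hr : r ≠ 0) :
    ∑ l, (pt3 i j k ε ε' l) ^ r = 1 + ε ^ r + ε' ^ r := by
  have h : ∀ l, (pt3 i j k ε ε' l) ^ r
      = (if l = i then 1 else 0) + (if l = j then ε ^ r else 0)
        + (if l = k then ε' ^ r else 0) := by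
    intro l; unfold pt3
    rcases eq_or_ne l i with h1 | h1 <;> rcases eq_or_ne l j with h2 | h2 <;>
      rcases eq_or_ne l k with h3 | h3 <;>
      first
      | (exfalso; exact hij (h1 ▸ h2 ▸ rfl))
      | (exfalso; exact hik (h1 ▸ h3 ▸ rfl))
      | (exfalso; exact hjk (h2 ▸ h3 ▸ rfl))
      | simp [h1, h2, h3, hij, hik, hjk, Ne.symm hij, Ne.symm hik, Ne.symm hjk, zero_pow hr]
  simp [h, Finset.sum_add_distrib]

private lemma eval_homog_scale {g : MvPolynomial (Fin n) ℝ} {d : ℕ} (hg : g.IsHomogeneous d)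
    (t : ℝ) (x : Fin n → ℝ) :
    eval (fun j => t * x j) g = t ^ d * eval x g := by
  rw [eval_eq', eval_eq', Finset.mul_sum]
  apply Finset.sum_congr rfl
  intro m hm
  have hdeg : ∑ l, m l = d := by
    have h1 := hg (mem_support_iff.mp hm)
    rw [show ((Finsupp.weight 1) m) = Finsupp.degree m from
      DFunLike.congr_fun Finsupp.degree_eq_weight_one.symm m] at h1
    rw [← h1, Finsupp.degree]
    exact (Finset.sum_subset (Finset.subset_univ _)
      (fun x _ hx => Finsupp.notMem_support_iff.mp hx)).symm
  have : ∀ l ∈ univ, (t * x l) ^ m l = t ^ m l * x l ^ m l := fun l _ => mul_pow _ _ _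
  rw [Finset.prod_congr rfl this, Finset.prod_mul_distrib, Finset.prod_pow_eq_pow_sum, hdeg]
  ring

private lemma mono_identity (i0 i1 i2 i3 : Fin n)
    (h01 : i0 ≠ i1) (h02 : i0 ≠ i2) (h03 : i0 ≠ i3)
    (h12 : i1 ≠ i2) (h13 : i1 ≠ i3) (h23 : i2 ≠ i3)
    (m : Fin n →₀ ℕ) (hdeg : ∑ l ∈ m.support, m l = 4) :
    12 * ∏ l, (pt1 i0 1 l) ^ m l
    = 4 * ∏ l, (pt2 i0 i1 1 l) ^ m l
      + 4 * ∏ l, (pt2 i0 i1 (-1) l) ^ m l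
      + 4 * ∏ l, (pt2 i0 i2 1 l) ^ m l
      + 4 * ∏ l, (pt2 i0 i2 (-1) l) ^ m l
      + 4 * ∏ l, (pt2 i0 i3 1 l) ^ m l
      + 4 * ∏ l, (pt2 i0 i3 (-1) l) ^ m l
      - 2 * ∏ l, (pt2 i1 i2 1 l) ^ m l
      - 2 * ∏ l, (pt2 i1 i2 (-1) l) ^ m l
      - 2 * ∏ l, (pt2 i1 i3 1 l) ^ m l
      - 2 * ∏ l, (pt2 i1 i3 (-1) l) ^ m l
      - 2 * ∏ l, (pt2 i2 i3 1 l) ^ m l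
      - 2 * ∏ l, (pt2 i2 i3 (-1) l) ^ m l
      - ∏ l, (pt3 i0 i1 i2 1 1 l) ^ m l
      - ∏ l, (pt3 i0 i1 i2 1 (-1) l) ^ m l
      - ∏ l, (pt3 i0 i1 i2 (-1) 1 l) ^ m l
      - ∏ l, (pt3 i0 i1 i2 (-1) (-1) l) ^ m l
      - ∏ l, (pt3 i0 i1 i3 1 1 l) ^ m l
      - ∏ l, (pt3 i0 i1 i3 1 (-1) l) ^ m l
      - ∏ l, (pt3 i0 i1 i3 (-1) 1 l) ^ m l
      - ∏ l, (pt3 i0 i1 i3 (-1) (-1) l) ^ m l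
      - ∏ l, (pt3 i0 i2 i3 1 1 l) ^ m l
      - ∏ l, (pt3 i0 i2 i3 1 (-1) l) ^ m l
      - ∏ l, (pt3 i0 i2 i3 (-1) 1 l) ^ m l
      - ∏ l, (pt3 i0 i2 i3 (-1) (-1) l) ^ m l
      + 2 * ∏ l, (pt3 i1 i2 i3 1 1 l) ^ m l
      + 2 * ∏ l, (pt3 i1 i2 i3 1 (-1) l) ^ m l
      + 2 * ∏ l, (pt3 i1 i2 i3 (-1) 1 l) ^ m l
      + 2 * ∏ l, (pt3 i1 i2 i3 (-1) (-1) l) ^ m l := by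
  have h10 := h01.symm; have h20 := h02.symm; have h30 := h03.symm
  have h21 := h12.symm; have h31 := h13.symm; have h32 := h23.symm
  by_cases hsupp : ∀ l, m l ≠ 0 → (l = i0 ∨ l = i1 ∨ l = i2 ∨ l = i3)
  · -- support inside the quadruple
    have hsub : m.support ⊆ ({i0, i1, i2, i3} : Finset (Fin n)) := by
      intro l hl
      have := hsupp l (Finsupp.mem_support_iff.mp hl)
      simp [Finset.mem_insert]
      tauto
    have hprod : ∀ v : Fin n → ℝ, ∏ l, v l ^ m l
        = v i0 ^ m i0 * v i1 ^ m i1 * v i2 ^ m i2 * v i3 ^ m i3 := by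
      intro v
      rw [← Finset.prod_subset (Finset.subset_univ ({i0, i1, i2, i3} : Finset (Fin n)))
        (fun x _ hxs => ?_)]
      · rw [Finset.prod_insert (by simp [h01, h02, h03]),
          Finset.prod_insert (by simp [h12, h13]),
          Finset.prod_insert (by simp [h23]), Finset.prod_singleton]
        ring
      · have hx0 : m x = 0 := by
          by_contra hmx
          exact hxs (by simpa [Finset.mem_insert] using hsupp x hmx)
        simp [hx0]
    have hdeg4 : m i0 + m i1 + m i2 + m i3 = 4 := by
      have hs : ∑ l ∈ ({i0, i1, i2, i3} : Finset (Fin n)), m l = 4 := by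
        rw [← Finset.sum_subset hsub (fun x _ hxs => Finsupp.notMem_support_iff.mp hxs)]
        exact hdeg
      rw [Finset.sum_insert (by simp [h01, h02, h03]),
        Finset.sum_insert (by simp [h12, h13]),
        Finset.sum_insert (by simp [h23]), Finset.sum_singleton] at hs
      omega
    simp only [hprod, pt1, pt2, pt3]
    simp only [if_pos rfl, h10, h20, h30, h21, h31, h32, if_neg, ite_true, ite_false,
      if_false, if_true, ne_eq, not_false_iff]
    simp only [if_neg h10, if_neg h20, if_neg h30, if_neg h21, if_neg h31, if_neg h32,
      if_neg h12, if_neg h13, if_neg h23, if_neg h01, if_neg h02, if_neg h03]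
    set a := m i0 with ha; clear_value a
    set b := m i1 with hb; clear_value b
    set c := m i2 with hc; clear_value c
    set d := m i3 with hd; clear_value d
    clear ha hb hc hd
    have ha4 : a ≤ 4 := by omega
    have hb4 : b ≤ 4 := by omega
    have hc4 : c ≤ 4 := by omega
    have hd4 : d ≤ 4 := by omega
    interval_cases a <;> interval_cases b <;> interval_cases c <;> interval_cases d <;>
      first
      | omega
      | norm_num
  · push_neg at hsupp
    obtain ⟨l0, hml0, hl0⟩ := hsupp
    obtain ⟨hne0, hne1, hne2, hne3⟩ : l0 ≠ i0 ∧ l0 ≠ i1 ∧ l0 ≠ i2 ∧ l0 ≠ i3 := by tauto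
    have hzero : ∀ v : Fin n → ℝ, v l0 = 0 → ∏ l, v l ^ m l = 0 := fun v hv =>
      Finset.prod_eq_zero (mem_univ l0) (by rw [hv]; exact zero_pow hml0)
    rw [hzero (pt1 i0 1) (by simp [pt1, pt2, pt3, hne0, hne1, hne2, hne3]),
      hzero (pt2 i0 i1 1) (by simp [pt1, pt2, pt3, hne0, hne1, hne2, hne3]),
      hzero (pt2 i0 i1 (-1)) (by simp [pt1, pt2, pt3, hne0, hne1, hne2, hne3]),
      hzero (pt2 i0 i2 1) (by simp [pt1, pt2, pt3, hne0, hne1, hne2, hne3]),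
      hzero (pt2 i0 i2 (-1)) (by simp [pt1, pt2, pt3, hne0, hne1, hne2, hne3]),
      hzero (pt2 i0 i3 1) (by simp [pt1, pt2, pt3, hne0, hne1, hne2, hne3]),
      hzero (pt2 i0 i3 (-1)) (by simp [pt1, pt2, pt3, hne0, hne1, hne2, hne3]),
      hzero (pt2 i1 i2 1) (by simp [pt1, pt2, pt3, hne0, hne1, hne2, hne3]),
      hzero (pt2 i1 i2 (-1)) (by simp [pt1, pt2, pt3, hne0, hne1, hne2, hne3]),
      hzero (pt2 i1 i3 1) (by simp [pt1, pt2, pt3, hne0, hne1, hne2, hne3]),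
      hzero (pt2 i1 i3 (-1)) (by simp [pt1, pt2, pt3, hne0, hne1, hne2, hne3]),
      hzero (pt2 i2 i3 1) (by simp [pt1, pt2, pt3, hne0, hne1, hne2, hne3]),
      hzero (pt2 i2 i3 (-1)) (by simp [pt1, pt2, pt3, hne0, hne1, hne2, hne3]),
      hzero (pt3 i0 i1 i2 1 1) (by simp [pt1, pt2, pt3, hne0, hne1, hne2, hne3]),
      hzero (pt3 i0 i1 i2 1 (-1)) (by simp [pt1, pt2, pt3, hne0, hne1, hne2, hne3]),
      hzero (pt3 i0 i1 i2 (-1) 1) (by simp [pt1, pt2, pt3, hne0, hne1, hne2, hne3]),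
      hzero (pt3 i0 i1 i2 (-1) (-1)) (by simp [pt1, pt2, pt3, hne0, hne1, hne2, hne3]),
      hzero (pt3 i0 i1 i3 1 1) (by simp [pt1, pt2, pt3, hne0, hne1, hne2, hne3]),
      hzero (pt3 i0 i1 i3 1 (-1)) (by simp [pt1, pt2, pt3, hne0, hne1, hne2, hne3]),
      hzero (pt3 i0 i1 i3 (-1) 1) (by simp [pt1, pt2, pt3, hne0, hne1, hne2, hne3]),
      hzero (pt3 i0 i1 i3 (-1) (-1)) (by simp [pt1, pt2, pt3, hne0, hne1, hne2, hne3]),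
      hzero (pt3 i0 i2 i3 1 1) (by simp [pt1, pt2, pt3, hne0, hne1, hne2, hne3]),
      hzero (pt3 i0 i2 i3 1 (-1)) (by simp [pt1, pt2, pt3, hne0, hne1, hne2, hne3]),
      hzero (pt3 i0 i2 i3 (-1) 1) (by simp [pt1, pt2, pt3, hne0, hne1, hne2, hne3]),
      hzero (pt3 i0 i2 i3 (-1) (-1)) (by simp [pt1, pt2, pt3, hne0, hne1, hne2, hne3]),
      hzero (pt3 i1 i2 i3 1 1) (by simp [pt1, pt2, pt3, hne0, hne1, hne2, hne3]),
      hzero (pt3 i1 i2 i3 1 (-1)) (by simp [pt1, pt2, pt3, hne0, hne1, hne2, hne3]),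
      hzero (pt3 i1 i2 i3 (-1) 1) (by simp [pt1, pt2, pt3, hne0, hne1, hne2, hne3]),
      hzero (pt3 i1 i2 i3 (-1) (-1)) (by simp [pt1, pt2, pt3, hne0, hne1, hne2, hne3])]
    norm_num

private lemma key_vanish (i0 i1 i2 i3 : Fin n)
    (h01 : i0 ≠ i1) (h02 : i0 ≠ i2) (h03 : i0 ≠ i3)
    (h12 : i1 ≠ i2) (h13 : i1 ≠ i3) (h23 : i2 ≠ i3)
    (g : MvPolynomial (Fin n) ℝ) (hg : g.IsHomogeneous 4)
    (hp : ∀ i j : Fin n, i ≠ j → ∀ ε : ℝ, ε = 1 ∨ ε = -1 → eval (pt2 i j ε) g = 0)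
    (ht : ∀ i j k : Fin n, i ≠ j → i ≠ k → j ≠ k → ∀ ε ε' : ℝ,
      (ε = 1 ∨ ε = -1) → (ε' = 1 ∨ ε' = -1) → eval (pt3 i j k ε ε') g = 0) :
    eval (pt1 i0 1) g = 0 := by
  have expand : ∀ v : Fin n → ℝ, eval v g
      = ∑ m ∈ g.support, coeff m g * ∏ l, v l ^ m l := fun v => eval_eq' v g
  have main : 12 * eval (pt1 i0 1) g
      = 4 * eval (pt2 i0 i1 1) g
      + 4 * eval (pt2 i0 i1 (-1)) g
      + 4 * eval (pt2 i0 i2 1) g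
      + 4 * eval (pt2 i0 i2 (-1)) g
      + 4 * eval (pt2 i0 i3 1) g
      + 4 * eval (pt2 i0 i3 (-1)) g
      - 2 * eval (pt2 i1 i2 1) g
      - 2 * eval (pt2 i1 i2 (-1)) g
      - 2 * eval (pt2 i1 i3 1) g
      - 2 * eval (pt2 i1 i3 (-1)) g
      - 2 * eval (pt2 i2 i3 1) g
      - 2 * eval (pt2 i2 i3 (-1)) g
      - eval (pt3 i0 i1 i2 1 1) g
      - eval (pt3 i0 i1 i2 1 (-1)) g
      - eval (pt3 i0 i1 i2 (-1) 1) g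
      - eval (pt3 i0 i1 i2 (-1) (-1)) g
      - eval (pt3 i0 i1 i3 1 1) g
      - eval (pt3 i0 i1 i3 1 (-1)) g
      - eval (pt3 i0 i1 i3 (-1) 1) g
      - eval (pt3 i0 i1 i3 (-1) (-1)) g
      - eval (pt3 i0 i2 i3 1 1) g
      - eval (pt3 i0 i2 i3 1 (-1)) g
      - eval (pt3 i0 i2 i3 (-1) 1) g
      - eval (pt3 i0 i2 i3 (-1) (-1)) g
      + 2 * eval (pt3 i1 i2 i3 1 1) g
      + 2 * eval (pt3 i1 i2 i3 1 (-1)) g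
      + 2 * eval (pt3 i1 i2 i3 (-1) 1) g
      + 2 * eval (pt3 i1 i2 i3 (-1) (-1)) g := by
    rw [← sub_eq_zero]
    simp only [expand, Finset.mul_sum, ← Finset.sum_add_distrib, ← Finset.sum_sub_distrib]
    apply Finset.sum_eq_zero
    intro m hm
    have hdeg : ∑ l ∈ m.support, m l = 4 := by
      have h1 := hg (mem_support_iff.mp hm)
      rw [show ((Finsupp.weight 1) m) = Finsupp.degree m from
        DFunLike.congr_fun Finsupp.degree_eq_weight_one.symm m] at h1
      exact h1
    have hid := mono_identity i0 i1 i2 i3 h01 h02 h03 h12 h13 h23 m hdeg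
    linear_combination (coeff m g) * hid
  rw [hp i0 i1 h01 1 (Or.inl rfl),
      hp i0 i1 h01 (-1) (Or.inr rfl),
      hp i0 i2 h02 1 (Or.inl rfl),
      hp i0 i2 h02 (-1) (Or.inr rfl),
      hp i0 i3 h03 1 (Or.inl rfl),
      hp i0 i3 h03 (-1) (Or.inr rfl),
      hp i1 i2 h12 1 (Or.inl rfl),
      hp i1 i2 h12 (-1) (Or.inr rfl),
      hp i1 i3 h13 1 (Or.inl rfl),
      hp i1 i3 h13 (-1) (Or.inr rfl),
      hp i2 i3 h23 1 (Or.inl rfl),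
      hp i2 i3 h23 (-1) (Or.inr rfl),
      ht i0 i1 i2 h01 h02 h12 1 1 (Or.inl rfl) (Or.inl rfl),
      ht i0 i1 i2 h01 h02 h12 1 (-1) (Or.inl rfl) (Or.inr rfl),
      ht i0 i1 i2 h01 h02 h12 (-1) 1 (Or.inr rfl) (Or.inl rfl),
      ht i0 i1 i2 h01 h02 h12 (-1) (-1) (Or.inr rfl) (Or.inr rfl),
      ht i0 i1 i3 h01 h03 h13 1 1 (Or.inl rfl) (Or.inl rfl),
      ht i0 i1 i3 h01 h03 h13 1 (-1) (Or.inl rfl) (Or.inr rfl),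
      ht i0 i1 i3 h01 h03 h13 (-1) 1 (Or.inr rfl) (Or.inl rfl),
      ht i0 i1 i3 h01 h03 h13 (-1) (-1) (Or.inr rfl) (Or.inr rfl),
      ht i0 i2 i3 h02 h03 h23 1 1 (Or.inl rfl) (Or.inl rfl),
      ht i0 i2 i3 h02 h03 h23 1 (-1) (Or.inl rfl) (Or.inr rfl),
      ht i0 i2 i3 h02 h03 h23 (-1) 1 (Or.inr rfl) (Or.inl rfl),
      ht i0 i2 i3 h02 h03 h23 (-1) (-1) (Or.inr rfl) (Or.inr rfl),
      ht i1 i2 i3 h12 h13 h23 1 1 (Or.inl rfl) (Or.inl rfl),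
      ht i1 i2 i3 h12 h13 h23 1 (-1) (Or.inl rfl) (Or.inr rfl),
      ht i1 i2 i3 h12 h13 h23 (-1) 1 (Or.inr rfl) (Or.inl rfl),
      ht i1 i2 i3 h12 h13 h23 (-1) (-1) (Or.inr rfl) (Or.inr rfl)] at main
  linarith [main]

end Aux

theorem Tn_psd_not_sos (n : ℕ) (hn : 4 ≤ n) :
    (∀ x : Fin n → ℝ,
        0 ≤ eval x (M n 2 * ((M n 2) ^ 3 - 5 * M n 2 * M n 4 + 6 * M n 6))) ∧
      ¬ IsSosForms (M n 2 * ((M n 2) ^ 3 - 5 * M n 2 * M n 4 + 6 * M n 6)) := by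
  constructor
  · intro x
    rw [evalT]
    have h := key_ineq (by omega : 0 < n) (fun j => x j ^ 2) (fun i => sq_nonneg _)
    set S : ℝ := ∑ j, x j ^ 2 with hS
    have hS0 : 0 ≤ S := Finset.sum_nonneg fun i _ => sq_nonneg _
    have hexp : ∑ i, x i ^ 2 * (S - 2 * x i ^ 2) * (S - 3 * x i ^ 2)
        = S ^ 3 - 5 * S * (∑ j, x j ^ 4) + 6 * (∑ j, x j ^ 6) := by
      have h1 : ∀ i ∈ univ, x i ^ 2 * (S - 2 * x i ^ 2) * (S - 3 * x i ^ 2)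
          = S ^ 2 * x i ^ 2 - 5 * S * x i ^ 4 + 6 * x i ^ 6 := fun i _ => by ring
      rw [Finset.sum_congr rfl h1]
      rw [Finset.sum_add_distrib, Finset.sum_sub_distrib, ← Finset.mul_sum, ← Finset.mul_sum,
        ← Finset.mul_sum]
      rw [← hS]; ring
    have h2 : 0 ≤ S ^ 3 - 5 * S * (∑ j, x j ^ 4) + 6 * (∑ j, x j ^ 6) := by
      rw [← hexp]; exact h
    exact mul_nonneg hS0 h2
  · rintro ⟨k, h, hhom, heq⟩
    set T := M n 2 * ((M n 2) ^ 3 - 5 * M n 2 * M n 4 + 6 * M n 6) with hT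
    -- evaluation of T at special points
    have hTpair : ∀ i j : Fin n, i ≠ j → ∀ ε : ℝ, ε = 1 ∨ ε = -1 →
        eval (pt2 i j ε) T = 0 := by
      intro i j hij ε hε
      rw [hT, evalT, sum_pt2 i j hij ε 2 (by norm_num), sum_pt2 i j hij ε 4 (by norm_num),
        sum_pt2 i j hij ε 6 (by norm_num)]
      rcases hε with rfl | rfl <;> norm_num
    have hTtrip : ∀ i j k' : Fin n, i ≠ j → i ≠ k' → j ≠ k' → ∀ ε ε' : ℝ,
        (ε = 1 ∨ ε = -1) → (ε' = 1 ∨ ε' = -1) → eval (pt3 i j k' ε ε') T = 0 := by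
      intro i j k' hij hik hjk ε ε' hε hε'
      rw [hT, evalT, sum_pt3 i j k' hij hik hjk ε ε' 2 (by norm_num),
        sum_pt3 i j k' hij hik hjk ε ε' 4 (by norm_num),
        sum_pt3 i j k' hij hik hjk ε ε' 6 (by norm_num)]
      rcases hε with rfl | rfl <;> rcases hε' with rfl | rfl <;> norm_num
    have hTscale : ∀ t : ℝ, eval (pt1 (⟨0, by omega⟩ : Fin n) t) T = 2 * t ^ 8 := by
      intro t
      rw [hT, evalT, sum_pt1 _ t 2 (by norm_num), sum_pt1 _ t 4 (by norm_num),
        sum_pt1 _ t 6 (by norm_num)]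
      ring
    -- each h i vanishes wherever T does
    have hvanish : ∀ (v : Fin n → ℝ), eval v T = 0 → ∀ i, eval v (h i) = 0 := by
      intro v hv i
      have hsum : ∑ j, (eval v (h j)) ^ 2 = 0 := by
        have : eval v T = ∑ j, (eval v (h j)) ^ 2 := by
          rw [heq, map_sum]
          exact Finset.sum_congr rfl fun j _ => by rw [map_pow]
        rw [← this, hv]
      have := (Finset.sum_eq_zero_iff_of_nonneg
        (fun j _ => sq_nonneg (eval v (h j)))).mp hsum i (mem_univ i)
      exact (pow_eq_zero_iff (two_ne_zero)).mp this
    -- indices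
    set i0 : Fin n := ⟨0, by omega⟩
    set i1 : Fin n := ⟨1, by omega⟩
    set i2 : Fin n := ⟨2, by omega⟩
    set i3 : Fin n := ⟨3, by omega⟩
    have h01 : i0 ≠ i1 := by simp [i0, i1, Fin.ext_iff]
    have h02 : i0 ≠ i2 := by simp [i0, i2, Fin.ext_iff]
    have h03 : i0 ≠ i3 := by simp [i0, i3, Fin.ext_iff]
    have h12 : i1 ≠ i2 := by simp [i1, i2, Fin.ext_iff]
    have h13 : i1 ≠ i3 := by simp [i1, i3, Fin.ext_iff]
    have h23 : i2 ≠ i3 := by simp [i2, i3, Fin.ext_iff]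
    choose d hd using hhom
    set a : Fin k → ℝ := fun i => eval (pt1 i0 1) (h i) with ha
    have hkey : ∀ i, d i = 4 → a i = 0 := by
      intro i hdi
      refine key_vanish i0 i1 i2 i3 h01 h02 h03 h12 h13 h23 (h i) (hdi ▸ hd i) ?_ ?_
      · intro p q hpq ε hε
        exact hvanish _ (hTpair p q hpq ε hε) i
      · intro p q r hpq hpr hqr ε ε' hε hε'
        exact hvanish _ (hTtrip p q r hpq hpr hqr ε ε' hε hε') i
    have hPeval : ∀ t : ℝ, ∑ i, (a i) ^ 2 * t ^ (2 * d i) = 2 * t ^ 8 := by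
      intro t
      have h1 : eval (pt1 i0 t) T = 2 * t ^ 8 := hTscale t
      have h2 : eval (pt1 i0 t) T = ∑ i, (eval (pt1 i0 t) (h i)) ^ 2 := by
        rw [heq, map_sum]
        exact Finset.sum_congr rfl fun j _ => by rw [map_pow]
      have h3 : ∀ i, eval (pt1 i0 t) (h i) = t ^ d i * a i := by
        intro i
        have hpt : pt1 i0 t = fun j => t * (pt1 i0 1 j) := by
          funext j
          by_cases hj : j = i0 <;> simp [pt1, hj]
        rw [hpt, eval_homog_scale (hd i), ha]
      rw [← h1, h2]
      apply Finset.sum_congr rfl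
      intro i _
      rw [h3 i]
      ring
    have hP : (∑ i, Polynomial.C ((a i) ^ 2) * Polynomial.X ^ (2 * d i))
        = Polynomial.C (2:ℝ) * Polynomial.X ^ 8 := by
      apply Polynomial.funext
      intro t
      rw [Polynomial.eval_finset_sum]
      simp only [Polynomial.eval_mul, Polynomial.eval_C, Polynomial.eval_pow, Polynomial.eval_X]
      rw [hPeval t]
    have hcoeff := congrArg (fun p => Polynomial.coeff p 8) hP
    simp only [Polynomial.finset_sum_coeff, Polynomial.coeff_C_mul, Polynomial.coeff_X_pow,
      Polynomial.coeff_C_mul] at hcoeff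
    have hzero : ∑ i, (a i) ^ 2 * (if 8 = 2 * d i then (1:ℝ) else 0) = 0 := by
      apply Finset.sum_eq_zero
      intro i _
      by_cases hdi : d i = 4
      · rw [hkey i hdi]; ring
      · rw [if_neg (by omega)]; ring
    rw [hzero] at hcoeff
    norm_num at hcoeff
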